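/- Let E and F be inner product spaces over ℂ, let (a_s)_{s∈ι} be an orthonormal family in E and (b_s)_{s∈ι} an orthonormal family in F indexed by the same type ι. Let (g_j)_{j∈ℕ} be complex numbers with ∑_j |g_j| < ∞, and let (u_j)_{j∈ℕ} ⊆ E and (v_j)_{j∈ℕ} ⊆ F be families of unit vectors (not assumed orthogonal to each other). Then the function s ↦ |∑_{j∈ℕ} g_j ⟨a_s, u_j⟩ ⟨b_s, v_j⟩| is summable over ι and ∑_{s∈ι} |∑_{j∈ℕ} g_j ⟨a_s, u_j⟩ ⟨b_s, v_j⟩| ≤ ∑_{j∈ℕ} |g_j|. -/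

import Mathlib

/-- **Lemma 1 (coefficient form).** For orthonormal families `a`, `b`, complex coefficients
`g` with `∑ |g j| < ∞`, and unit vectors `u j`, `v j`, the function
`s ↦ |∑ j, g j ⟨a s, u j⟩ ⟨b s, v j⟩|` is summable with sum at most `∑ j, |g j|`. -/
theorem stmt_0 {E F : Type*} [NormedAddCommGroup E] [InnerProductSpace ℂ E]
    [NormedAddCommGroup F] [InnerProductSpace ℂ F] {ι : Type*}
    (a : ι → E) (b : ι → F) (ha : Orthonormal ℂ a) (hb : Orthonormal ℂ b)
    (g : ℕ → ℂ) (hg : Summable fun j => ‖g j‖)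
    (u : ℕ → E) (v : ℕ → F) (hu : ∀ j, ‖u j‖ = 1) (hv : ∀ j, ‖v j‖ = 1) :
    Summable (fun s : ι =>
      ‖∑' j : ℕ, g j * (inner ℂ (a s) (u j) : ℂ) * (inner ℂ (b s) (v j) : ℂ)‖) ∧
    ∑' s : ι, ‖∑' j : ℕ, g j * (inner ℂ (a s) (u j) : ℂ) * (inner ℂ (b s) (v j) : ℂ)‖
      ≤ ∑' j : ℕ, ‖g j‖ := by
  classical
  set f : ι → ℕ → ℝ := fun s j =>
    ‖g j‖ * (‖(inner ℂ (a s) (u j) : ℂ)‖ * ‖(inner ℂ (b s) (v j) : ℂ)‖) with hfdef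
  have hα : ∀ s j, ‖(inner ℂ (a s) (u j) : ℂ)‖ ≤ 1 := fun s j => by
    simpa [ha.1 s, hu j] using norm_inner_le_norm (𝕜 := ℂ) (a s) (u j)
  have hβ : ∀ s j, ‖(inner ℂ (b s) (v j) : ℂ)‖ ≤ 1 := fun s j => by
    simpa [hb.1 s, hv j] using norm_inner_le_norm (𝕜 := ℂ) (b s) (v j)
  have hfle : ∀ s j, f s j ≤ ‖g j‖ := fun s j => by
    have h1 : ‖(inner ℂ (a s) (u j) : ℂ)‖ * ‖(inner ℂ (b s) (v j) : ℂ)‖ ≤ 1 := by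
      have := mul_le_mul (hα s j) (hβ s j) (norm_nonneg _) zero_le_one
      simpa using this
    calc f s j ≤ ‖g j‖ * 1 := by
          exact mul_le_mul_of_nonneg_left h1 (norm_nonneg _)
      _ = ‖g j‖ := mul_one _
  have hfnn : ∀ s j, 0 ≤ f s j := fun s j => by positivity
  have hfs : ∀ s, Summable (f s) := fun s =>
    hg.of_nonneg_of_le (hfnn s) (hfle s)
  have hsum : ∀ s, Summable (fun j =>
      g j * (inner ℂ (a s) (u j) : ℂ) * (inner ℂ (b s) (v j) : ℂ)) := fun s => by
    refine Summable.of_norm ?_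
    have : (fun j => ‖g j * (inner ℂ (a s) (u j) : ℂ) * (inner ℂ (b s) (v j) : ℂ)‖) = f s := by
      funext j; simp [hfdef, norm_mul, mul_assoc]
    rw [this]; exact hfs s
  have hnorm : ∀ s, ‖∑' j : ℕ, g j * (inner ℂ (a s) (u j) : ℂ) * (inner ℂ (b s) (v j) : ℂ)‖
      ≤ ∑' j, f s j := fun s => by
    have h1 := norm_tsum_le_tsum_norm (f := fun j =>
      g j * (inner ℂ (a s) (u j) : ℂ) * (inner ℂ (b s) (v j) : ℂ)) (by
        have : (fun j => ‖g j * (inner ℂ (a s) (u j) : ℂ) * (inner ℂ (b s) (v j) : ℂ)‖) = f s := by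
          funext j; simp [hfdef, norm_mul, mul_assoc]
        rw [this]; exact hfs s)
    calc ‖∑' j : ℕ, g j * (inner ℂ (a s) (u j) : ℂ) * (inner ℂ (b s) (v j) : ℂ)‖
        ≤ ∑' j, ‖g j * (inner ℂ (a s) (u j) : ℂ) * (inner ℂ (b s) (v j) : ℂ)‖ := h1
      _ = ∑' j, f s j := by
          congr 1; funext j; simp [hfdef, norm_mul, mul_assoc]
  -- per-j Cauchy–Schwarz + Bessel bound over any finite set S
  have hCS : ∀ (S : Finset ι) (j : ℕ),
      ∑ s ∈ S, f s j ≤ ‖g j‖ := by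
    intro S j
    have hBa : ∑ s ∈ S, ‖(inner ℂ (a s) (u j) : ℂ)‖ ^ 2 ≤ 1 := by
      simpa [hu j] using ha.sum_inner_products_le (u j) (s := S)
    have hBb : ∑ s ∈ S, ‖(inner ℂ (b s) (v j) : ℂ)‖ ^ 2 ≤ 1 := by
      simpa [hv j] using hb.sum_inner_products_le (v j) (s := S)
    have hcs := Finset.sum_mul_sq_le_sq_mul_sq S
      (fun s => ‖(inner ℂ (a s) (u j) : ℂ)‖) (fun s => ‖(inner ℂ (b s) (v j) : ℂ)‖)
    have hnn : (0:ℝ) ≤ ∑ s ∈ S, ‖(inner ℂ (a s) (u j) : ℂ)‖ * ‖(inner ℂ (b s) (v j) : ℂ)‖ :=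
      Finset.sum_nonneg fun s _ => by positivity
    have hle1 : ∑ s ∈ S, ‖(inner ℂ (a s) (u j) : ℂ)‖ * ‖(inner ℂ (b s) (v j) : ℂ)‖ ≤ 1 := by
      nlinarith [Finset.sum_nonneg (fun s (_ : s ∈ S) =>
        sq_nonneg ‖(inner ℂ (a s) (u j) : ℂ)‖),
        Finset.sum_nonneg (fun s (_ : s ∈ S) => sq_nonneg ‖(inner ℂ (b s) (v j) : ℂ)‖)]
    calc ∑ s ∈ S, f s j
        = ‖g j‖ * ∑ s ∈ S, ‖(inner ℂ (a s) (u j) : ℂ)‖ * ‖(inner ℂ (b s) (v j) : ℂ)‖ := by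
          rw [Finset.mul_sum]
      _ ≤ ‖g j‖ * 1 := mul_le_mul_of_nonneg_left hle1 (norm_nonneg _)
      _ = ‖g j‖ := mul_one _
  have key : ∀ S : Finset ι,
      ∑ s ∈ S, ‖∑' j : ℕ, g j * (inner ℂ (a s) (u j) : ℂ) * (inner ℂ (b s) (v j) : ℂ)‖
        ≤ ∑' j, ‖g j‖ := by
    intro S
    have h1 : ∑ s ∈ S, ‖∑' j : ℕ, g j * (inner ℂ (a s) (u j) : ℂ) * (inner ℂ (b s) (v j) : ℂ)‖
        ≤ ∑ s ∈ S, ∑' j, f s j :=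
      Finset.sum_le_sum fun s _ => hnorm s
    have h2 : ∑ s ∈ S, ∑' j, f s j = ∑' j, ∑ s ∈ S, f s j :=
      (Summable.tsum_finsetSum fun s _ => hfs s).symm
    have hsummb : Summable (fun j => ∑ s ∈ S, f s j) :=
      hg.of_nonneg_of_le (fun j => Finset.sum_nonneg fun s _ => hfnn s j)
        (fun j => hCS S j)
    have h3 : ∑' j, ∑ s ∈ S, f s j ≤ ∑' j, ‖g j‖ :=
      Summable.tsum_le_tsum (fun j => hCS S j) hsummb hg
    linarith
  have hSummable : Summable (fun s : ι =>
      ‖∑' j : ℕ, g j * (inner ℂ (a s) (u j) : ℂ) * (inner ℂ (b s) (v j) : ℂ)‖) :=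
    summable_of_sum_le (fun s => norm_nonneg _) key
  exact ⟨hSummable, Summable.tsum_le_of_sum_le hSummable key⟩
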